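/- Let T_F be the positive root of T² − 7.0604·T − 10.1186 = 0, let L ≥ 0 and S > 0 be real numbers. Suppose T_0 > T_F satisfies (T_0 − 7.0604 − 10.1186/T_0)·(log(T_0/(2π)) + L) = S and T_W > 0 satisfies T_W·(log(T_W/(2π)) + L) = S. Then T_0 ≤ T_F + T_W. -/

import Mathlib

/-- with `T_F` the positive root of `T² − 7.0604T − 10.1186 = 0`, `L ≥ 0`,
`S > 0`, if `T₀ > T_F` satisfies `(T₀ − 7.0604 − 10.1186/T₀)(log(T₀/(2π)) + L) = S` and
`T_W` satisfies `T_W (log(T_W/(2π)) + L) = S`, then `T₀ ≤ T_F + T_W`. -/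
theorem statement_17 (TF : ℝ) (hTF0 : 0 < TF)
    (hTF : TF ^ 2 - 7.0604 * TF - 10.1186 = 0)
    (L S : ℝ) (hL : 0 ≤ L) (hS : 0 < S)
    (T0 : ℝ) (hT0 : TF < T0)
    (hT0eq : (T0 - 7.0604 - 10.1186 / T0) * (Real.log (T0 / (2 * Real.pi)) + L) = S)
    (TW : ℝ) (hTW : 0 < TW)
    (hTWeq : TW * (Real.log (TW / (2 * Real.pi)) + L) = S) :
    T0 ≤ TF + TW := by
  by_contra h
  push_neg at h
  have hT0pos : 0 < T0 := hTF0.trans hT0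
  have hTFgt : (7.0604 : ℝ) < TF := by nlinarith
  have h10 : (10.1186 : ℝ) / T0 * T0 = 10.1186 := div_mul_cancel₀ _ (ne_of_gt hT0pos)
  have key : TW < T0 - 7.0604 - 10.1186 / T0 := by
    rw [← mul_lt_mul_iff_of_pos_right hT0pos]
    nlinarith [mul_pos (sub_pos.mpr h) (show (0:ℝ) < T0 + TF - 7.0604 by nlinarith),
      mul_pos hTW (show (0:ℝ) < TF - 7.0604 by linarith)]
  set A := Real.log (T0 / (2 * Real.pi)) + L with hA
  set B := Real.log (TW / (2 * Real.pi)) + L with hB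
  have hlog : Real.log (TW / (2 * Real.pi)) ≤ Real.log (T0 / (2 * Real.pi)) := by
    apply Real.log_le_log (div_pos hTW (by positivity))
    apply div_le_div_of_nonneg_right (by linarith) (by positivity)
  clear_value A B
  have hfpos : 0 < T0 - 7.0604 - 10.1186 / T0 := hTW.trans key
  have hApos : 0 < A := by
    by_contra hA0
    push_neg at hA0
    nlinarith [mul_nonneg hfpos.le (neg_nonneg.mpr hA0)]
  have hBpos : 0 < B := by
    by_contra hB0
    push_neg at hB0
    nlinarith [mul_nonneg hTW.le (neg_nonneg.mpr hB0)]
  have hBA : B ≤ A := by rw [hA, hB]; linarith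
  nlinarith [mul_lt_mul_of_pos_right key hBpos,
    mul_le_mul_of_nonneg_left hBA hfpos.le]
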